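/- The subgroup H of SO(3) generated by the two rotation matrices A = [[1/3, −2√2/3, 0], [2√2/3, 1/3, 0], [0, 0, 1]] and B = [[1, 0, 0], [0, 1/3, −2√2/3], [0, 2√2/3, 1/3]] is a free group of rank 2; equivalently, A and B satisfy no nontrivial reduced relation, so H is isomorphic to the free group F_2 on two generators. -/

import Mathlib

open Pointwise Matrix

set_option synthInstance.maxHeartbeats 1000000
set_option maxHeartbeats 1000000

/-- The unitary/orthogonal group acts on vectors by matrix multiplication. -/
instance unitarySMulVec {n : ℕ} {K : Type*} [CommRing K] [StarRing K] :
    MulAction (Matrix.unitaryGroup (Fin n) K) (Fin n → K) where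
  smul g v := (g : Matrix (Fin n) (Fin n) K).mulVec v
  one_smul v := by
    show (1 : Matrix.unitaryGroup (Fin n) K).1.mulVec v = v
    simp
  mul_smul g h v := by
    show (g * h : Matrix.unitaryGroup (Fin n) K).1.mulVec v
        = g.1.mulVec (h.1.mulVec v)
    simp [Matrix.mulVec_mulVec]

/-- `SO(n)`, the special orthogonal group, as a subgroup of the orthogonal group. -/
def SO (n : ℕ) : Subgroup (Matrix.orthogonalGroup (Fin n) ℝ) where
  carrier := {g | (g : Matrix (Fin n) (Fin n) ℝ).det = 1}
  one_mem' := by simp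
  mul_mem' := by
    intro a b ha hb
    simp only [Set.mem_setOf_eq] at *
    rw [Matrix.UnitaryGroup.mul_val, Matrix.det_mul, ha, hb, mul_one]
  inv_mem' := by
    intro a ha
    simp only [Set.mem_setOf_eq] at *
    have h : ((a : Matrix (Fin n) (Fin n) ℝ) * ((a⁻¹ : Matrix.orthogonalGroup (Fin n) ℝ) :
        Matrix (Fin n) (Fin n) ℝ)).det = 1 := by
      rw [← Matrix.UnitaryGroup.mul_val, mul_inv_cancel]
      simp
    rw [Matrix.det_mul, ha, one_mul] at h
    exact h

noncomputable def matA : Matrix (Fin 3) (Fin 3) ℝ :=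
  !![1/3, -(2*Real.sqrt 2)/3, 0;
     (2*Real.sqrt 2)/3, 1/3, 0;
     0, 0, 1]

noncomputable def matB : Matrix (Fin 3) (Fin 3) ℝ :=
  !![1, 0, 0;
     0, 1/3, -(2*Real.sqrt 2)/3;
     0, (2*Real.sqrt 2)/3, 1/3]

lemma sqrt_two_mul_self : Real.sqrt 2 * Real.sqrt 2 = 2 := Real.mul_self_sqrt (by norm_num)

lemma matA_mem : matA ∈ Matrix.orthogonalGroup (Fin 3) ℝ := by
  rw [Matrix.mem_orthogonalGroup_iff]
  ext i j
  fin_cases i <;> fin_cases j <;>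
    simp [matA, Matrix.mul_apply, Fin.sum_univ_three, Matrix.conjTranspose_apply] <;>
    nlinarith [sqrt_two_mul_self]

lemma matB_mem : matB ∈ Matrix.orthogonalGroup (Fin 3) ℝ := by
  rw [Matrix.mem_orthogonalGroup_iff]
  ext i j
  fin_cases i <;> fin_cases j <;>
    simp [matB, Matrix.mul_apply, Fin.sum_univ_three, Matrix.conjTranspose_apply] <;>
    nlinarith [sqrt_two_mul_self]

lemma matA_det : matA.det = 1 := by
  simp [matA, Matrix.det_fin_three]
  nlinarith [sqrt_two_mul_self]

lemma matB_det : matB.det = 1 := by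
  simp [matB, Matrix.det_fin_three]
  nlinarith [sqrt_two_mul_self]

/-- The rotation `A` as an element of `SO(3)`. -/
noncomputable def soA : SO 3 := ⟨⟨matA, matA_mem⟩, matA_det⟩

/-- The rotation `B` as an element of `SO(3)`. -/
noncomputable def soB : SO 3 := ⟨⟨matB, matB_mem⟩, matB_det⟩


namespace So3FreeAux

abbrev Letter := Bool × Bool

/-- The inverse of `matA`. -/
noncomputable def matAi : Matrix (Fin 3) (Fin 3) ℝ :=
  !![1/3, (2*Real.sqrt 2)/3, 0;
     -(2*Real.sqrt 2)/3, 1/3, 0;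
     0, 0, 1]

/-- The inverse of `matB`. -/
noncomputable def matBi : Matrix (Fin 3) (Fin 3) ℝ :=
  !![1, 0, 0;
     0, 1/3, (2*Real.sqrt 2)/3;
     0, -(2*Real.sqrt 2)/3, 1/3]

lemma star_matA : star matA = matAi := by
  ext i j
  fin_cases i <;> fin_cases j <;>
    simp [matA, matAi, Matrix.star_eq_conjTranspose, Matrix.conjTranspose_apply,
      Matrix.vecHead, Matrix.vecTail]

lemma star_matB : star matB = matBi := by
  ext i j
  fin_cases i <;> fin_cases j <;>
    simp [matB, matBi, Matrix.star_eq_conjTranspose, Matrix.conjTranspose_apply,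
      Matrix.vecHead, Matrix.vecTail]

/-- The matrix corresponding to each letter (generator or its inverse). -/
noncomputable def mat : Letter → Matrix (Fin 3) (Fin 3) ℝ
  | (true, true) => matA
  | (true, false) => matAi
  | (false, true) => matB
  | (false, false) => matBi

/-- The integer-triple step: `(a, b, c)` codes the vector `(a, b√2, c)/3^n`. -/
def stp : Letter → ℤ × ℤ × ℤ → ℤ × ℤ × ℤ
  | (true, true), (a, b, c) => (a - 4*b, 2*a + b, 3*c)
  | (true, false), (a, b, c) => (a + 4*b, b - 2*a, 3*c)
  | (false, true), (a, b, c) => (3*a, b - 2*c, 4*b + c)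
  | (false, false), (a, b, c) => (3*a, b + 2*c, c - 4*b)

def st (v : ℤ × ℤ × ℤ) (l : List Letter) : ℤ × ℤ × ℤ := l.foldr stp v

@[simp] lemma st_nil (v : ℤ × ℤ × ℤ) : st v [] = v := rfl

@[simp] lemma st_cons (v : ℤ × ℤ × ℤ) (x : Letter) (l : List Letter) :
    st v (x :: l) = stp x (st v l) := rfl

lemma mulVec_st (l : List Letter) (v : ℤ × ℤ × ℤ) :
    (3:ℝ)^l.length • ((l.map mat).prod).mulVec
        ![(v.1:ℝ), (v.2.1:ℝ) * Real.sqrt 2, (v.2.2:ℝ)]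
    = ![((st v l).1:ℝ), ((st v l).2.1:ℝ) * Real.sqrt 2, ((st v l).2.2:ℝ)] := by
  induction l with
  | nil => simp [Matrix.one_mulVec]
  | cons x t ih =>
    rw [st_cons, List.map_cons, List.prod_cons, ← Matrix.mulVec_mulVec, List.length_cons,
      pow_succ, mul_comm ((3:ℝ)^t.length) 3, mul_smul, ← Matrix.mulVec_smul, ih]
    obtain ⟨a, b, c⟩ := st v t
    obtain ⟨x1, x2⟩ := x
    cases x1 <;> cases x2 <;>
      · funext i
        fin_cases i <;>
          · simp [mat, matA, matB, matAi, matBi, stp, Matrix.mulVec, dotProduct,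
              Fin.sum_univ_three]
            try push_cast
            try field_simp
            try ring_nf
            try simp only [Real.sq_sqrt (show (0:ℝ) ≤ 2 by norm_num)]
            try ring

/-- Reducedness of a word, as a chain condition: no letter is followed by its inverse. -/
def Rel (x y : Letter) : Prop := ¬(x.1 = y.1 ∧ y.2 = !x.2)

lemma chain'_reduce (L : List Letter) : List.Chain' Rel (FreeGroup.reduce L) := by
  induction L with
  | nil => simp [List.Chain']
  | cons x L ih =>
    rw [FreeGroup.reduce.cons]
    rcases h : FreeGroup.reduce L with _ | ⟨hd, tl⟩
    · simp [List.Chain']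
    · rw [h] at ih
      dsimp only
      split_ifs with hc
      · exact ih.tail
      · refine List.isChain_cons_cons.mpr ⟨?_, ih⟩
        rintro ⟨h1, h2⟩
        exact hc ⟨h1, by revert h2; cases x.2 <;> cases hd.2 <;> simp⟩

lemma chain'_toWord (w : FreeGroup Bool) : List.Chain' Rel w.toWord := by
  rw [← FreeGroup.reduce_toWord]
  exact chain'_reduce _

lemma stp_a_div (x : Letter) (hx : x.1 = false) (v : ℤ × ℤ × ℤ) : (3:ℤ) ∣ (stp x v).1 := by
  obtain ⟨x1, x2⟩ := x
  obtain ⟨a, b, c⟩ := v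
  cases x1 <;> cases x2 <;> simp_all [stp]

lemma stp_c_div (x : Letter) (hx : x.1 = true) (v : ℤ × ℤ × ℤ) : (3:ℤ) ∣ (stp x v).2.2 := by
  obtain ⟨x1, x2⟩ := x
  obtain ⟨a, b, c⟩ := v
  cases x1 <;> cases x2 <;> simp_all [stp]

lemma stp_same (x : Letter) (v : ℤ × ℤ × ℤ) :
    (stp x (stp x v)).2.1 = 2 * (stp x v).2.1 - 9 * v.2.1 := by
  obtain ⟨x1, x2⟩ := x
  obtain ⟨a, b, c⟩ := v
  cases x1 <;> cases x2 <;> simp [stp] <;> ring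

lemma stp_b_A (x : Letter) (hx : x.1 = true) (v : ℤ × ℤ × ℤ) (hv : (3:ℤ) ∣ v.1) :
    (stp x v).2.1 % 3 = v.2.1 % 3 := by
  obtain ⟨x1, x2⟩ := x
  obtain ⟨a, b, c⟩ := v
  cases x1 <;> cases x2 <;> simp_all [stp] <;> omega

lemma stp_b_B (x : Letter) (hx : x.1 = false) (v : ℤ × ℤ × ℤ) (hv : (3:ℤ) ∣ v.2.2) :
    (stp x v).2.1 % 3 = v.2.1 % 3 := by
  obtain ⟨x1, x2⟩ := x
  obtain ⟨a, b, c⟩ := v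
  cases x1 <;> cases x2 <;> simp_all [stp] <;> omega

/-- If the first two letters are different generators, the middle coefficient is unchanged
mod 3. -/
lemma st_mod_three (x y : Letter) (hxy : x.1 ≠ y.1) (t : List Letter) (v : ℤ × ℤ × ℤ) :
    (st v (x :: y :: t)).2.1 % 3 = (st v (y :: t)).2.1 % 3 := by
  rw [st_cons]
  cases hx : x.1
  · have hy : y.1 = true := by revert hxy; rw [hx]; cases y.1 <;> simp
    exact stp_b_B x hx _ (by rw [st_cons]; exact stp_c_div y hy _)
  · have hy : y.1 = false := by revert hxy; rw [hx]; cases y.1 <;> simp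
    exact stp_b_A x hx _ (by rw [st_cons]; exact stp_a_div y hy _)

/-- The key lemma: a nonempty reduced word whose leftmost letter is an `A`-letter applied to
`(1,0,0)` (resp. a `B`-letter applied to `(0,0,1)`) has middle coefficient not divisible by 3. -/
lemma key : ∀ l : List Letter, List.Chain' Rel l → ∀ h : l ≠ [],
    ((l.getLast h).1 = true → ¬ (3:ℤ) ∣ (st (1,0,0) l).2.1)
    ∧ ((l.getLast h).1 = false → ¬ (3:ℤ) ∣ (st (0,0,1) l).2.1)
  | [], _, h => absurd rfl h
  | [x], _, _ => by
    obtain ⟨x1, x2⟩ := x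
    cases x1 <;> cases x2 <;> simp [stp] <;> omega
  | x :: y :: t, hc, _ => by
    have hyt : (y :: t : List Letter) ≠ [] := by simp
    have hc' : List.Chain' Rel (y :: t) := hc.tail
    have hrel : Rel x y := (List.isChain_cons_cons.mp hc).1
    have hlast : (x :: y :: t).getLast (by simp) = (y :: t).getLast hyt :=
      List.getLast_cons hyt
    have IH := key (y :: t) hc' hyt
    rw [hlast]
    by_cases hxy : x.1 = y.1
    · -- same generator; reducedness forces the same sign, so `y = x`
      have hsign : y.2 = x.2 := by
        by_contra hne
        exact hrel ⟨hxy, by revert hne; cases x.2 <;> cases y.2 <;> simp⟩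
      have hyx : y = x := Prod.ext hxy.symm hsign
      subst hyx
      constructor <;> intro hl hdvd
      · have h9 := stp_same y (st (1,0,0) t)
        have hb := IH.1 hl
        rw [st_cons, st_cons] at hdvd
        rw [st_cons] at hb
        omega
      · have h9 := stp_same y (st (0,0,1) t)
        have hb := IH.2 hl
        rw [st_cons, st_cons] at hdvd
        rw [st_cons] at hb
        omega
    · constructor <;> intro hl hdvd
      · have hm := st_mod_three x y hxy t (1,0,0)
        have hb := IH.1 hl
        omega
      · have hm := st_mod_three x y hxy t (0,0,1)
        have hb := IH.2 hl
        omega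

end So3FreeAux

/-- The coercion from `SO 3` to matrices, as a monoid homomorphism. -/
noncomputable def soToMatrix : SO 3 →* Matrix (Fin 3) (Fin 3) ℝ where
  toFun g := ((g : Matrix.orthogonalGroup (Fin 3) ℝ) : Matrix (Fin 3) (Fin 3) ℝ)
  map_one' := rfl
  map_mul' _ _ := rfl

lemma soToMatrix_letter (x : So3FreeAux.Letter) :
    soToMatrix (cond x.2 ((fun b : Bool => if b then soA else soB) x.1)
      ((fun b : Bool => if b then soA else soB) x.1)⁻¹) = So3FreeAux.mat x := by
  obtain ⟨x1, x2⟩ := x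
  cases x1 <;> cases x2 <;>
    simp [soToMatrix, So3FreeAux.mat, soA, soB, ← So3FreeAux.star_matA, ← So3FreeAux.star_matB]

lemma soToMatrix_lift (w : FreeGroup Bool) :
    soToMatrix (FreeGroup.lift (fun b : Bool => if b then soA else soB) w)
      = (w.toWord.map So3FreeAux.mat).prod := by
  conv_lhs => rw [← FreeGroup.mk_toWord (x := w)]
  rw [FreeGroup.lift_mk, map_list_prod, List.map_map]
  congr 1
  exact List.map_congr_left fun x _ => soToMatrix_letter x

/-- The subgroup of `SO(3)` generated by the rotations `A` and `B` is free of rank two: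
the canonical homomorphism from the free group on two generators to `SO(3)` sending the
generators to `A` and `B` is injective. -/
theorem so3_free_subgroup :
    Function.Injective
      (FreeGroup.lift (fun b : Bool => if b then soA else soB) : FreeGroup Bool →* SO 3) := by
  rw [injective_iff_map_eq_one]
  intro w hw
  by_contra hne
  have hl : w.toWord ≠ [] := fun h => hne (FreeGroup.toWord_eq_nil_iff.mp h)
  have hM : ((w.toWord.map So3FreeAux.mat).prod) = 1 := by
    rw [← soToMatrix_lift, hw, MonoidHom.map_one]
  have hkey := So3FreeAux.key w.toWord (So3FreeAux.chain'_toWord w) hl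
  have main : ∀ v : ℤ × ℤ × ℤ, v.2.1 = 0 →
      ¬ (3:ℤ) ∣ (So3FreeAux.st v w.toWord).2.1 → False := by
    intro v hv hb
    have hvst := So3FreeAux.mulVec_st w.toWord v
    rw [hM, Matrix.one_mulVec] at hvst
    have h1 : (0:ℝ) = ((So3FreeAux.st v w.toWord).2.1 : ℝ) * Real.sqrt 2 := by
      simpa [hv] using congrFun hvst 1
    have hs : Real.sqrt 2 ≠ 0 := by positivity
    have hz : ((So3FreeAux.st v w.toWord).2.1 : ℝ) = 0 := by
      rcases mul_eq_zero.mp h1.symm with h | h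
      · exact h
      · exact absurd h hs
    have hz' : (So3FreeAux.st v w.toWord).2.1 = 0 := by exact_mod_cast hz
    rw [hz'] at hb
    exact hb (dvd_zero 3)
  cases hlast : (w.toWord.getLast hl).1
  · exact main (0, 0, 1) rfl (hkey.2 hlast)
  · exact main (1, 0, 0) rfl (hkey.1 hlast)
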